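/- Let G be a sofic countable group. Then the left multiplication action of G on itself is a sofic action. -/

import Mathlib

open scoped Classical Pointwise

noncomputable def hDist {A : Type*} [Fintype A] (σ τ : Equiv.Perm A) : ℝ :=
  ((Finset.univ.filter fun a => σ a ≠ τ a).card : ℝ) / (Fintype.card A : ℝ)

/-- `φ : G → Sym(Fin n)` is an `(F, E, ε)`-orbit approximation of the action `α : G ↷ X`. -/
def IsOrbitApprox {G X : Type*} [Group G] {n : ℕ} (α : G →* Equiv.Perm X)
    (F : Finset G) (E : Finset X) (ε : ℝ) (φ : G → Equiv.Perm (Fin n)) : Prop :=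
  ∃ (m : ℕ) (S : Finset (Fin n)) (π : Fin n → X → Fin m),
    ((S.card : ℝ) > (1 - ε) * (n : ℝ)) ∧
    (∀ s ∈ S, Set.InjOn (π s) (E : Set X)) ∧
    (∀ s ∈ S, ∀ g ∈ F, ∀ x ∈ E, φ g s ∈ S → α g⁻¹ x ∈ E →
      π (φ g s) x = π s (α g⁻¹ x))

/-- Soficity of an action `α : G ↷ X` given as a homomorphism `G →* Sym(X)`. -/
def SoficAction {G X : Type*} [Group G] (α : G →* Equiv.Perm X) : Prop :=
  ∀ (F : Finset G) (E : Finset X) (ε : ℝ), 0 < ε →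
    ∃ (n : ℕ) (φ : G → Equiv.Perm (Fin n)),
      φ 1 = 1 ∧
      (∀ g ∈ F, ∀ h ∈ F, hDist (φ (g * h)) (φ g * φ h) < ε) ∧
      IsOrbitApprox α F E ε φ

/-- Soficity of a group. -/
def SoficGroup (G : Type*) [Group G] : Prop :=
  ∀ (F : Finset G) (ε : ℝ), 0 < ε →
    ∃ (n : ℕ) (φ : G → Equiv.Perm (Fin n)),
      φ 1 = 1 ∧
      (∀ g ∈ F, ∀ h ∈ F, hDist (φ (g * h)) (φ g * φ h) < ε) ∧
      (∀ g ∈ F, g ≠ 1 → hDist 1 (φ g) > 1 - ε)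

lemma hDist_self {A : Type*} [Fintype A] (σ : Equiv.Perm A) : hDist σ σ = 0 := by
  simp [hDist]

lemma hDist_nonneg {A : Type*} [Fintype A] (σ τ : Equiv.Perm A) : 0 ≤ hDist σ τ := by
  unfold hDist; positivity

lemma hDist_comm {A : Type*} [Fintype A] (σ τ : Equiv.Perm A) : hDist σ τ = hDist τ σ := by
  have h : (Finset.univ.filter fun a => σ a ≠ τ a) = (Finset.univ.filter fun a => τ a ≠ σ a) := by
    ext a; simp [ne_comm]
  unfold hDist; rw [h]

lemma hDist_triangle {A : Type*} [Fintype A] (σ τ ρ : Equiv.Perm A) :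
    hDist σ ρ ≤ hDist σ τ + hDist τ ρ := by
  have hsub : (Finset.univ.filter fun a => σ a ≠ ρ a) ⊆
      (Finset.univ.filter fun a => σ a ≠ τ a) ∪ (Finset.univ.filter fun a => τ a ≠ ρ a) := by
    intro a ha
    simp only [Finset.mem_filter, Finset.mem_union, Finset.mem_univ, true_and] at *
    by_contra hc
    push_neg at hc
    exact ha (hc.1.trans hc.2)
  unfold hDist
  rw [← add_div]
  rcases Nat.eq_zero_or_pos (Fintype.card A) with h | h
  · simp [h]
  · gcongr
    exact_mod_cast le_trans (Finset.card_le_card hsub) (Finset.card_union_le _ _)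

lemma hDist_mul_left {A : Type*} [Fintype A] (ρ σ τ : Equiv.Perm A) :
    hDist (ρ * σ) (ρ * τ) = hDist σ τ := by
  have h : (Finset.univ.filter fun a => (ρ * σ) a ≠ (ρ * τ) a)
      = (Finset.univ.filter fun a => σ a ≠ τ a) := by
    ext a; simp [Equiv.Perm.mul_apply]
  unfold hDist; rw [h]

lemma card_filter_ne {n : ℕ} (hn : 0 < n) (σ τ : Equiv.Perm (Fin n)) :
    ((Finset.univ.filter fun s => σ s ≠ τ s).card : ℝ) = hDist σ τ * n := by
  unfold hDist
  rw [Fintype.card_fin]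
  field_simp
  congr 1
  convert rfl

set_option maxHeartbeats 1000000 in
theorem stmt_12' {G : Type*} [Group G] [Countable G]
    (hG : ∀ (F : Finset G) (ε : ℝ), 0 < ε →
    ∃ (n : ℕ) (φ : G → Equiv.Perm (Fin n)),
      φ 1 = 1 ∧
      (∀ g ∈ F, ∀ h ∈ F, hDist (φ (g * h)) (φ g * φ h) < ε) ∧
      (∀ g ∈ F, g ≠ 1 → hDist 1 (φ g) > 1 - ε)) :
    ∀ (F : Finset G) (E : Finset G) (ε : ℝ), 0 < ε →
    ∃ (n : ℕ) (φ : G → Equiv.Perm (Fin n)),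
      φ 1 = 1 ∧
      (∀ g ∈ F, ∀ h ∈ F, hDist (φ (g * h)) (φ g * φ h) < ε) ∧
      ∃ (m : ℕ) (S : Finset (Fin n)) (π : Fin n → G → Fin m),
        ((S.card : ℝ) > (1 - ε) * (n : ℝ)) ∧
        (∀ s ∈ S, Set.InjOn (π s) (E : Set G)) ∧
        (∀ s ∈ S, ∀ g ∈ F, ∀ x ∈ E, φ g s ∈ S → g⁻¹ * x ∈ E →
          π (φ g s) x = π s (g⁻¹ * x)) := by
  intro F E ε hε
  by_cases hGt : ∃ g0 : G, g0 ≠ 1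
  case neg =>
    push_neg at hGt
    refine ⟨1, fun _ => 1, rfl, ?_, 1, Finset.univ, fun _ _ => 0, ?_, ?_, ?_⟩
    · intro g _ h _
      simpa [hDist_self] using hε
    · simp only [Finset.card_univ, Fintype.card_fin, Nat.cast_one]
      nlinarith
    · intro s _ x hx y hy _
      rw [hGt x, hGt y]
    · intro s _ g _ x _ _ _
      rfl
  case pos =>
    obtain ⟨g0, hg0⟩ := hGt
    obtain ⟨N, hNdef⟩ : ∃ N : ℕ, N = F.card * E.card + E.card * E.card := ⟨_, rfl⟩
    have hN0 : (0:ℝ) ≤ N := Nat.cast_nonneg N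
    have hN1 : (0:ℝ) < 3 * N + 3 := by positivity
    obtain ⟨ε', hε'pos, hε'half, hε'le⟩ :
        ∃ ε' : ℝ, 0 < ε' ∧ ε' ≤ 1 / 2 ∧ ε' ≤ ε / (3 * N + 3) :=
      ⟨min (1/2) (ε / (3 * N + 3)), lt_min (by norm_num) (by positivity),
        min_le_left _ _, min_le_right _ _⟩
    have hε'mul : ε' * (3 * N + 3) ≤ ε := by
      rw [← le_div_iff₀ hN1]; exact hε'le
    have hε'ε : ε' < ε := by nlinarith
    obtain ⟨K, hKdef⟩ : ∃ K : Finset G, K = F ∪ E ∪ E⁻¹ ∪ E * E⁻¹ ∪ {g0} := ⟨_, rfl⟩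
    obtain ⟨n, φ, hφ1, hmul, hsep⟩ := hG K ε' hε'pos
    have hFK : ∀ g ∈ F, g ∈ K := by
      intro g hg; simp only [hKdef, Finset.mem_union]; tauto
    have hEK : ∀ x ∈ E, x ∈ K := by
      intro x hx; simp only [hKdef, Finset.mem_union]; tauto
    have hEinvK : ∀ x ∈ E, x⁻¹ ∈ K := by
      intro x hx
      have : x⁻¹ ∈ E⁻¹ := Finset.inv_mem_inv hx
      simp only [hKdef, Finset.mem_union]; tauto
    have hEEK : ∀ x ∈ E, ∀ y ∈ E, x * y⁻¹ ∈ K := by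
      intro x hx y hy
      have : x * y⁻¹ ∈ E * E⁻¹ := Finset.mul_mem_mul hx (Finset.inv_mem_inv hy)
      simp only [hKdef, Finset.mem_union]; tauto
    have hg0K : g0 ∈ K := by
      simp only [hKdef, Finset.mem_union, Finset.mem_singleton]; tauto
    -- n is positive
    have hn : 0 < n := by
      rcases Nat.eq_zero_or_pos n with h0 | h
      · exfalso
        have hs := hsep g0 hg0K hg0
        subst h0
        simp [hDist] at hs
        linarith
      · exact h
    have hnR : (0:ℝ) < n := by exact_mod_cast hn
    -- approximate inverses
    have hinv : ∀ h ∈ E, hDist (φ h⁻¹) (φ h)⁻¹ < ε' := by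
      intro h hh
      have e1 : φ h * (φ h)⁻¹ = φ (h * h⁻¹) := by simp [hφ1]
      calc hDist (φ h⁻¹) (φ h)⁻¹
          = hDist (φ h * φ h⁻¹) (φ h * (φ h)⁻¹) := (hDist_mul_left _ _ _).symm
        _ = hDist (φ h * φ h⁻¹) (φ (h * h⁻¹)) := by rw [e1]
        _ = hDist (φ (h * h⁻¹)) (φ h * φ h⁻¹) := hDist_comm _ _
        _ < ε' := hmul h (hEK h hh) h⁻¹ (hEinvK h hh)
    -- fact 1 : equivariance failure is small
    have fact1 : ∀ (g : G), ∀ x ∈ E, g⁻¹ * x ∈ E →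
        hDist ((φ x)⁻¹ * φ g) (φ (g⁻¹ * x))⁻¹ < 2 * ε' := by
      intro g x hx hgx
      have e0 := hDist_mul_left (φ x) ((φ x)⁻¹ * φ g) (φ (g⁻¹ * x))⁻¹
      rw [mul_inv_cancel_left] at e0
      rw [← e0]
      have t1 : hDist (φ g) (φ x * φ ((g⁻¹ * x)⁻¹)) < ε' := by
        have hx' : x * (g⁻¹ * x)⁻¹ = g := by group
        have h' := hmul x (hEK x hx) ((g⁻¹ * x)⁻¹) (hEinvK _ hgx)
        rw [hx'] at h'
        exact h'
      have t2 : hDist (φ x * φ ((g⁻¹ * x)⁻¹)) (φ x * (φ (g⁻¹ * x))⁻¹) < ε' := by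
        rw [hDist_mul_left]; exact hinv _ hgx
      calc hDist (φ g) (φ x * (φ (g⁻¹ * x))⁻¹)
          ≤ hDist (φ g) (φ x * φ ((g⁻¹ * x)⁻¹))
            + hDist (φ x * φ ((g⁻¹ * x)⁻¹)) (φ x * (φ (g⁻¹ * x))⁻¹) := hDist_triangle _ _ _
        _ < 2 * ε' := by linarith
    -- fact 2 : separation
    have fact2 : ∀ x ∈ E, ∀ y ∈ E, x ≠ y →
        1 - 3 * ε' < hDist (φ x)⁻¹ (φ y)⁻¹ := by
      intro x hx y hy hxy
      have e0 := hDist_mul_left (φ y) (φ x)⁻¹ (φ y)⁻¹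
      have e1 : φ y * (φ y)⁻¹ = 1 := by group
      rw [e1] at e0
      rw [← e0]
      have hyx : y * x⁻¹ ≠ 1 := by
        intro h
        exact hxy ((mul_inv_eq_one.mp h).symm)
      have hsepyx : hDist 1 (φ (y * x⁻¹)) > 1 - ε' := hsep (y * x⁻¹) (hEEK y hy x hx) hyx
      have t1 : hDist (φ (y * x⁻¹)) (φ y * φ x⁻¹) < ε' :=
        hmul y (hEK y hy) x⁻¹ (hEinvK x hx)
      have t2 : hDist (φ y * φ x⁻¹) (φ y * (φ x)⁻¹) < ε' := by
        rw [hDist_mul_left]; exact hinv x hx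
      have tri1 : hDist 1 (φ (y * x⁻¹)) ≤
          hDist 1 (φ y * (φ x)⁻¹) + hDist (φ y * (φ x)⁻¹) (φ (y * x⁻¹)) := hDist_triangle _ _ _
      have tri2 : hDist (φ y * (φ x)⁻¹) (φ (y * x⁻¹)) ≤
          hDist (φ y * (φ x)⁻¹) (φ y * φ x⁻¹) + hDist (φ y * φ x⁻¹) (φ (y * x⁻¹)) := hDist_triangle _ _ _
      have hc1 : hDist (φ y * (φ x)⁻¹) (φ y * φ x⁻¹) = hDist (φ y * φ x⁻¹) (φ y * (φ x)⁻¹) := hDist_comm _ _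
      have hc2 : hDist (φ y * φ x⁻¹) (φ (y * x⁻¹)) = hDist (φ (y * x⁻¹)) (φ y * φ x⁻¹) := hDist_comm _ _
      have hc3 : hDist (φ y * (φ x)⁻¹) 1 = hDist 1 (φ y * (φ x)⁻¹) := hDist_comm _ _
      rw [hc3]
      linarith
    -- bad sets
    obtain ⟨bad1, hbad1⟩ : ∃ bad1 : G → G → Finset (Fin n), bad1 = fun g x =>
        if g⁻¹ * x ∈ E then
          Finset.univ.filter (fun s => ((φ x)⁻¹ * φ g) s ≠ (φ (g⁻¹ * x))⁻¹ s)
        else ∅ := ⟨_, rfl⟩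
    obtain ⟨bad2, hbad2⟩ : ∃ bad2 : G → G → Finset (Fin n), bad2 = fun x y =>
        if x ≠ y then Finset.univ.filter (fun s => (φ x)⁻¹ s = (φ y)⁻¹ s) else ∅ := ⟨_, rfl⟩
    obtain ⟨Bad, hBaddef⟩ : ∃ Bad : Finset (Fin n), Bad =
        (F.biUnion fun g => E.biUnion fun x => bad1 g x) ∪
        (E.biUnion fun x => E.biUnion fun y => bad2 x y) := ⟨_, rfl⟩
    obtain ⟨S, hSdef⟩ : ∃ S : Finset (Fin n), S = Finset.univ \ Bad := ⟨_, rfl⟩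
    have h1 : ∀ (g : G), ∀ x ∈ E, ((bad1 g x).card : ℝ) ≤ 3 * ε' * n := by
      intro g x hx
      by_cases hgx : g⁻¹ * x ∈ E
      · simp only [hbad1, if_pos hgx]
        rw [card_filter_ne hn]
        have := fact1 g x hx hgx
        nlinarith
      · simp only [hbad1, if_neg hgx, Finset.card_empty, Nat.cast_zero]
        nlinarith [hε'pos, hnR]
    have h2 : ∀ x ∈ E, ∀ y ∈ E, ((bad2 x y).card : ℝ) ≤ 3 * ε' * n := by
      intro x hx y hy
      by_cases hxy : x ≠ y
      · simp only [hbad2, if_pos hxy]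
        have hcompl : Finset.univ.filter (fun s => (φ x)⁻¹ s = (φ y)⁻¹ s)
            = Finset.univ \ Finset.univ.filter (fun s => (φ x)⁻¹ s ≠ (φ y)⁻¹ s) := by
          ext s
          simp [Finset.mem_sdiff, Finset.mem_filter]
        have hle : (Finset.univ.filter (fun s => (φ x)⁻¹ s ≠ (φ y)⁻¹ s)).card ≤ n := by
          simpa using Finset.card_le_card
            (Finset.subset_univ (Finset.univ.filter (fun s => (φ x)⁻¹ s ≠ (φ y)⁻¹ s)))
        have hsplitR : ((Finset.univ.filter (fun s => (φ x)⁻¹ s = (φ y)⁻¹ s)).card : ℝ)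
            = n - ((Finset.univ.filter (fun s => (φ x)⁻¹ s ≠ (φ y)⁻¹ s)).card : ℝ) := by
          rw [hcompl, Finset.card_sdiff_of_subset (Finset.subset_univ _), Finset.card_univ,
            Fintype.card_fin]
          push_cast [Nat.cast_sub hle]
          ring
        rw [hsplitR, card_filter_ne hn]
        have := fact2 x hx y hy hxy
        nlinarith
      · simp only [hbad2, if_neg hxy, Finset.card_empty, Nat.cast_zero]
        nlinarith [hε'pos, hnR]
    have c1 : ((F.biUnion fun g => E.biUnion fun x => bad1 g x).card : ℝ)
        ≤ (F.card * E.card : ℕ) * (3 * ε' * n) := by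
      calc ((F.biUnion fun g => E.biUnion fun x => bad1 g x).card : ℝ)
          ≤ ∑ g ∈ F, ((E.biUnion fun x => bad1 g x).card : ℝ) := by
            exact_mod_cast Finset.card_biUnion_le
        _ ≤ ∑ g ∈ F, ∑ x ∈ E, ((bad1 g x).card : ℝ) :=
            Finset.sum_le_sum (fun g _ => by exact_mod_cast Finset.card_biUnion_le)
        _ ≤ ∑ g ∈ F, ∑ x ∈ E, (3 * ε' * n) :=
            Finset.sum_le_sum (fun g _ => Finset.sum_le_sum (fun x hx => h1 g x hx))
        _ = (F.card * E.card : ℕ) * (3 * ε' * n) := by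
            simp [Finset.sum_const, nsmul_eq_mul]; ring
    have c2 : ((E.biUnion fun x => E.biUnion fun y => bad2 x y).card : ℝ)
        ≤ (E.card * E.card : ℕ) * (3 * ε' * n) := by
      calc ((E.biUnion fun x => E.biUnion fun y => bad2 x y).card : ℝ)
          ≤ ∑ x ∈ E, ((E.biUnion fun y => bad2 x y).card : ℝ) := by
            exact_mod_cast Finset.card_biUnion_le
        _ ≤ ∑ x ∈ E, ∑ y ∈ E, ((bad2 x y).card : ℝ) :=
            Finset.sum_le_sum (fun x _ => by exact_mod_cast Finset.card_biUnion_le)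
        _ ≤ ∑ x ∈ E, ∑ y ∈ E, (3 * ε' * n) :=
            Finset.sum_le_sum (fun x hx => Finset.sum_le_sum (fun y hy => h2 x hx y hy))
        _ = (E.card * E.card : ℕ) * (3 * ε' * n) := by
            simp [Finset.sum_const, nsmul_eq_mul]; ring
    have hBadcard : ((Bad.card : ℝ)) ≤ (N : ℝ) * (3 * ε' * n) := by
      have hu : (Bad.card : ℝ) ≤ ((F.biUnion fun g => E.biUnion fun x => bad1 g x).card : ℝ)
          + ((E.biUnion fun x => E.biUnion fun y => bad2 x y).card : ℝ) := by
        rw [hBaddef]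
        exact_mod_cast Finset.card_union_le _ _
      have hsum : (N : ℝ) * (3 * ε' * n)
          = ((F.card * E.card : ℕ) : ℝ) * (3 * ε' * n)
            + ((E.card * E.card : ℕ) : ℝ) * (3 * ε' * n) := by
        rw [hNdef]; push_cast; ring
      rw [hsum]
      linarith
    have hScard : ((S.card : ℝ)) ≥ n - (N : ℝ) * (3 * ε' * n) := by
      have hsub : Bad ⊆ Finset.univ := Finset.subset_univ _
      have hcard : S.card = n - Bad.card := by
        rw [hSdef, Finset.card_sdiff_of_subset hsub, Finset.card_univ, Fintype.card_fin]
      have hle : Bad.card ≤ n := by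
        have := Finset.card_le_card hsub
        simpa using this
      have : ((S.card : ℝ)) = n - (Bad.card : ℝ) := by
        rw [hcard]
        push_cast [Nat.cast_sub hle]
        ring
      rw [this]
      linarith
    refine ⟨n, φ, hφ1, fun g hg h hh => lt_trans (hmul g (hFK g hg) h (hFK h hh)) hε'ε,
      n, S, fun s x => (φ x)⁻¹ s, ?_, ?_, ?_⟩
    · -- cardinality of S
      have key : 3 * ε' * (N : ℝ) * n ≤ (ε - 3 * ε') * n := by
        have : 3 * ε' * N ≤ ε - 3 * ε' := by nlinarith
        nlinarith
      nlinarith [hScard, hε'pos, hnR]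
    · -- injectivity
      intro s hs x hx y hy hxyeq
      by_contra hxy
      have hbad : s ∈ bad2 x y := by
        simp only [hbad2, if_pos hxy, Finset.mem_filter, Finset.mem_univ, true_and]
        exact hxyeq
      have hxE : x ∈ E := hx
      have hyE : y ∈ E := hy
      have hsBad : s ∈ Bad := by
        rw [hBaddef]
        exact Finset.mem_union_right _
          (Finset.mem_biUnion.mpr ⟨x, hxE, Finset.mem_biUnion.mpr ⟨y, hyE, hbad⟩⟩)
      rw [hSdef] at hs
      exact (Finset.mem_sdiff.mp hs).2 hsBad
    · -- equivariance
      intro s hs g hg x hx hgs hgx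
      have hnotbad : s ∉ bad1 g x := by
        intro hb
        rw [hSdef] at hs
        rw [Finset.mem_sdiff, hBaddef] at hs
        exact hs.2
          (Finset.mem_union_left _
            (Finset.mem_biUnion.mpr ⟨g, hg, Finset.mem_biUnion.mpr ⟨x, hx, hb⟩⟩))
      simp only [hbad1, if_pos hgx, Finset.mem_filter, Finset.mem_univ, true_and,
        not_not] at hnotbad
      exact hnotbad

theorem stmt_12 {G : Type*} [Group G] [Countable G] (hG : SoficGroup G) :
    SoficAction (MulAction.toPermHom G G) := by
  intro F E ε hε
  obtain ⟨n, φ, h1, h2, m, S, π, h3, h4, h5⟩ := stmt_12' hG F E ε hε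
  refine ⟨n, φ, h1, h2, m, S, π, h3, h4, ?_⟩
  intro s hs g hg x hx hgs hgx
  have hα : (MulAction.toPermHom G G) g⁻¹ x = g⁻¹ * x := rfl
  rw [hα] at hgx ⊢
  exact h5 s hs g hg x hx hgs hgx
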